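/- Let 0 < R ≤ R' be real numbers and let a, b ∈ ℂ with R ≤ |a|, |b| ≤ R'. Then a and b can be joined by a piecewise C¹ path lying entirely in the closed annulus {ζ ∈ ℂ : R ≤ |ζ| ≤ R'} whose Euclidean length is at most (π/2)·|a − b|. -/

import Mathlib

/-- A path `γ : [0,1] → ℂ` is piecewise C¹ if it is continuous on `[0,1]` and
C¹ on each subinterval of some finite partition of `[0,1]`. -/
def PiecewiseC1On (γ : ℝ → ℂ) : Prop :=
  ContinuousOn γ (Set.Icc 0 1) ∧
  ∃ (m : ℕ) (a : Fin (m + 1) → ℝ), a 0 = 0 ∧ a (Fin.last m) = 1 ∧ Monotone a ∧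
    ∀ i : Fin m, ContDiffOn ℝ 1 γ (Set.Icc (a i.castSucc) (a i.succ))

/-- The length of a path `γ : [0,1] → ℂ`: its total variation on `[0,1]`. -/
noncomputable def pathLength (γ : ℝ → ℂ) : ENNReal := eVariationOn γ (Set.Icc 0 1)

open Real
section Aux

private lemma aux1 (d r x s : ℝ) (hd : 0 ≤ d) (hr : 0 ≤ r) (hx : 0 ≤ x) (hs0 : 0 ≤ s)
    (hjordan : 2*x ≤ π*s) (hC : 4*x ≤ π^2*s^2) :
    (d + 2*r*x)^2 ≤ (π/2)^2 * (d^2 + 4*r*(r+d)*s^2) := by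
  have hπ : 3.141592 < π := Real.pi_gt_d6
  have hB0 : 0 ≤ π^2*s^2 - 4*x^2 := by
    nlinarith [mul_nonneg (sub_nonneg.2 hjordan) (add_nonneg (mul_nonneg Real.pi_pos.le hs0) (mul_nonneg (by norm_num : (0:ℝ) ≤ 2) hx))]
  have hA : (0:ℝ) ≤ π^2/4 - 1 := by nlinarith
  nlinarith [mul_nonneg (mul_nonneg hr hd) (sub_nonneg.2 hC),
    mul_nonneg (mul_nonneg hr hr) hB0,
    mul_nonneg (mul_nonneg hd hd) hA]

private lemma aux2 (x s : ℝ) (hx0 : 0 < x) (hx1 : x < 1) (hπ2 : 9.86 < π^2)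
    (hcube : x - x^3/4 ≤ s) (hcube0 : 0 ≤ x - x^3/4)
    (hC : π^2*s^2 < 4*x) : x < 1/2 := by
  have hs2 : (x - x^3/4)^2 ≤ s^2 := by nlinarith
  by_contra h
  push_neg at h
  have h1 : 0 ≤ x - 1/2 := by linarith
  have h2 : 0 ≤ 1 - x := by linarith
  nlinarith [mul_nonneg h1 h2, mul_nonneg (mul_nonneg h1 h2) (mul_nonneg h1 h2),
    mul_nonneg (mul_nonneg h1 h1) (mul_nonneg h2 h2), sq_nonneg (x - 1/2), sq_nonneg (1-x),
    mul_nonneg (mul_nonneg h1 h1) h2, mul_nonneg h1 (mul_nonneg h2 h2),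
    mul_nonneg (mul_nonneg (mul_nonneg h1 h1) h1) h2, mul_nonneg (mul_nonneg (mul_nonneg h1 h2) h2) h2]

private lemma aux3 (x s : ℝ) (hx0 : 0 < x) (hxhalf : x < 1/2) (hπ2 : 9.86 < π^2)
    (hcube0 : 0 ≤ x - x^3/4) (hs2 : (x - x^3/4)^2 ≤ s^2) : (9:ℝ)/2*x^2 ≤ π^2*s^2 - 4*x^2 := by
  have hq : x^2 ≤ 1/4 := by nlinarith
  nlinarith [mul_pos hx0 hx0, sq_nonneg (x*x), mul_nonneg (mul_nonneg hx0.le hx0.le) (sub_nonneg.2 hq),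
    mul_nonneg (sub_nonneg.2 hq) (sub_nonneg.2 hq), mul_nonneg (mul_nonneg (mul_nonneg hx0.le hx0.le) (mul_nonneg hx0.le hx0.le)) (sub_nonneg.2 hq)]

private lemma aux4 (d r x s : ℝ) (hd : 0 ≤ d) (hr : 0 ≤ r) (hπ2 : 9.86 < π^2)
    (hB : (9:ℝ)/2*x^2 ≤ π^2*s^2 - 4*x^2) :
    (d + 2*r*x)^2 ≤ (π/2)^2 * (d^2 + 4*r*(r+d)*s^2) := by
  have h1 : (0:ℝ) ≤ (7/6*d - 12/7*x*r)^2 := sq_nonneg _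
  have h2 : (0:ℝ) ≤ r*d*(π^2*s^2) := by positivity
  have h3 : (0:ℝ) ≤ (π^2/4 - 1 - 49/36)*d^2 := by nlinarith [sq_nonneg d]
  have h4 : (0:ℝ) ≤ (π^2*s^2 - 4*x^2 - 144/49*x^2)*r^2 := by
    have : (0:ℝ) ≤ π^2*s^2 - 4*x^2 - 144/49*x^2 := by nlinarith [sq_nonneg x]
    positivity
  nlinarith [h1, h2, h3, h4]

private lemma key_poly (d r x s : ℝ) (hd : 0 ≤ d) (hr : 0 ≤ r) (hx : 0 ≤ x)
    (hx2 : x ≤ π/2) (hs : s = Real.sin x) :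
    (d + 2*r*x)^2 ≤ (π/2)^2 * (d^2 + 4*r*(r+d)*s^2) := by
  have hπ : 3.141592 < π := Real.pi_gt_d6
  have hπ2 : 9.86 < π^2 := by nlinarith
  have hs0 : 0 ≤ s := hs ▸ Real.sin_nonneg_of_nonneg_of_le_pi hx (by linarith)
  have hjordan : 2*x ≤ π*s := by
    have := Real.mul_le_sin hx hx2
    rw [← hs] at this
    rw [div_mul_eq_mul_div, div_le_iff₀ Real.pi_pos] at this
    linarith
  rcases le_or_gt (4*x) (π^2*s^2) with hC | hC
  · exact aux1 d r x s hd hr hx hs0 hjordan hC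
  · have hx0 : 0 < x := by
      rcases hx.lt_or_eq with h | h
      · exact h
      · exfalso; rw [← h] at hC; nlinarith [sq_nonneg s]
    have hx1 : x < 1 := by nlinarith
    have hcube : x - x^3/4 ≤ s := by
      have := Real.sin_gt_sub_cube hx0
      rw [← hs] at this
      nlinarith [pow_pos hx0 3]
    have hcube0 : 0 ≤ x - x^3/4 := by nlinarith [mul_pos hx0 hx0, mul_nonneg (mul_nonneg hx0.le hx0.le) hx0.le]
    have hs2 : (x - x^3/4)^2 ≤ s^2 := by nlinarith
    exact aux4 d r x s hd hr hπ2
      (aux3 x s hx0 (aux2 x s hx0 hx1 hπ2 hcube hcube0 hC) hπ2 hcube0 hs2)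

private lemma key_ineq (d r x : ℝ) (hd : 0 ≤ d) (hr : 0 ≤ r) (hx : 0 ≤ x) (hx2 : x ≤ π/2) :
    d + 2*r*x ≤ π/2 * Real.sqrt (d^2 + 4*r*(r+d)*(Real.sin x)^2) := by
  have h := key_poly d r x (Real.sin x) hd hr hx hx2 rfl
  have hL : 0 ≤ d + 2*r*x := by positivity
  calc d + 2*r*x = Real.sqrt ((d + 2*r*x)^2) := (Real.sqrt_sq hL).symm
    _ ≤ Real.sqrt ((π/2)^2 * (d^2 + 4*r*(r+d)*(Real.sin x)^2)) := Real.sqrt_le_sqrt h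
    _ = π/2 * Real.sqrt (d^2 + 4*r*(r+d)*(Real.sin x)^2) := by
        rw [Real.sqrt_mul (by positivity), Real.sqrt_sq (by positivity)]

private lemma pasting {α β : Type*} [TopologicalSpace α] [TopologicalSpace β] {f : α → β} {s t : Set α}
    (hs : IsClosed s) (ht : IsClosed t) (hf : ContinuousOn f s) (hg : ContinuousOn f t) :
    ContinuousOn f (s ∪ t) := by
  intro x hx
  rcases hx with hxs | hxt
  · by_cases hxt : x ∈ t
    · exact (hf x hxs).union (hg x hxt)
    · exact (hf x hxs).union (continuousWithinAt_of_notMem_closure (by rwa [ht.closure_eq]))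
  · by_cases hxs : x ∈ s
    · exact (hf x hxs).union (hg x hxt)
    · exact (continuousWithinAt_of_notMem_closure (by rwa [hs.closure_eq])).union (hg x hxt)

private lemma evar_le_of_lip {f : ℝ → ℂ} {K a b : ℝ} (hK : 0 ≤ K) (hab : a ≤ b)
    (h : ∀ x ∈ Set.Icc a b, ∀ y ∈ Set.Icc a b, dist (f x) (f y) ≤ K * dist x y) :
    eVariationOn f (Set.Icc a b) ≤ ENNReal.ofReal (K * (b - a)) := by
  have hlip : LipschitzOnWith K.toNNReal f (Set.Icc a b) := by
    rw [lipschitzOnWith_iff_dist_le_mul]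
    intro x hx y hy
    rw [Real.coe_toNNReal _ hK]
    exact h x hx y hy
  have h2 : eVariationOn (f ∘ id) (Set.Icc a b) ≤ K.toNNReal * eVariationOn id (Set.Icc a b) :=
    hlip.comp_eVariationOn_le (Set.mapsTo_id _)
  have h3 : eVariationOn id (Set.Icc a b) ≤ ENNReal.ofReal (b - a) := by
    have := MonotoneOn.eVariationOn_le (f := fun x : ℝ => x) (s := Set.Icc a b)
      (fun x _ y _ hxy => hxy) (Set.left_mem_Icc.2 hab) (Set.right_mem_Icc.2 hab)
    simpa [Set.inter_self] using this
  calc eVariationOn f (Set.Icc a b) = eVariationOn (f ∘ id) (Set.Icc a b) := rfl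
    _ ≤ K.toNNReal * eVariationOn id (Set.Icc a b) := h2
    _ ≤ K.toNNReal * ENNReal.ofReal (b - a) := mul_le_mul' le_rfl h3
    _ = ENNReal.ofReal (K * (b - a)) := by
        rw [← ENNReal.ofReal_coe_nnreal, Real.coe_toNNReal _ hK, ← ENNReal.ofReal_mul hK]

private lemma exp_I_lip (X Y : ℝ) :
    ‖Complex.exp (X*Complex.I) - Complex.exp (Y*Complex.I)‖ ≤ |X - Y| := by
  have := (lipschitzWith_circleMap 0 1).dist_le_mul X Y
  simpa [circleMap, Complex.dist_eq, Real.dist_eq] using this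

private lemma abs_formula (ra rb β : ℝ) (u : ℂ) (hu : ‖u‖ = 1) :
    (‖(ra:ℂ)*u - (rb:ℂ)*u*Complex.exp (β*Complex.I)‖)^2
      = (ra+rb-2*(min ra rb))^2
      + 4*(min ra rb)*((min ra rb)+(ra+rb-2*(min ra rb)))*(Real.sin (|β|/2))^2 := by
  have h1 : (ra:ℂ)*u - (rb:ℂ)*u*Complex.exp (β*Complex.I)
      = u * (((ra - rb*Real.cos β : ℝ):ℂ) + ((-(rb*Real.sin β) : ℝ):ℂ) * Complex.I) := by
    rw [Complex.exp_mul_I, ← Complex.ofReal_cos, ← Complex.ofReal_sin]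
    push_cast
    ring
  rw [h1, norm_mul, hu, one_mul, Complex.sq_norm, Complex.normSq_add_mul_I]
  have hpy := Real.sin_sq_add_cos_sq β
  have key : ∀ y : ℝ, Real.cos y = 1 - 2*(Real.sin (y/2))^2 := fun y => by
    have h := Real.cos_two_mul (y/2)
    have h2 := Real.sin_sq_add_cos_sq (y/2)
    rw [show 2*(y/2) = y by ring] at h
    linarith
  have h1c : Real.cos β = 1 - 2*(Real.sin (|β|/2))^2 := by
    rcases abs_choice β with h | h
    · rw [h, ← key]
    · rw [h, ← key, Real.cos_neg]
  have hexp : (ra - rb*Real.cos β)^2 + (-(rb*Real.sin β))^2 = ra^2 + rb^2 - 2*ra*rb*Real.cos β := by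
    nlinarith [hpy]
  rw [hexp]
  rcases le_total ra rb with h | h
  · rw [min_eq_left h, h1c]; ring
  · rw [min_eq_right h, h1c]; ring

end Aux

section Construction

private lemma construction (R R' ra rb β : ℝ) (u : ℂ) (hu : ‖u‖ = 1)
    (hR : 0 < R) (h1 : R ≤ ra) (h2 : ra ≤ R') (h3 : R ≤ rb) (h4 : rb ≤ R')
    (hβ : |β| ≤ π) (a b : ℂ)
    (ha_eq : a = (ra:ℂ) * u) (hb_eq : b = (rb:ℂ) * u * Complex.exp ((β:ℝ) * Complex.I)) :
    ∃ γ : ℝ → ℂ, PiecewiseC1On γ ∧ γ 0 = a ∧ γ 1 = b ∧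
      (∀ t ∈ Set.Icc (0 : ℝ) 1, R ≤ ‖γ t‖ ∧ ‖γ t‖ ≤ R') ∧
      pathLength γ ≤ ENNReal.ofReal (π / 2 * ‖a - b‖) := by
  have hrra : min ra rb ≤ ra := min_le_left _ _
  have hrrb : min ra rb ≤ rb := min_le_right _ _
  have hRr : R ≤ min ra rb := le_min h1 h3
  have hr0 : 0 < min ra rb := lt_of_lt_of_le hR hRr
  set r : ℝ := min ra rb with hrdef
  set γ : ℝ → ℂ := fun t =>
    if t ≤ 1/3 then ((ra + 3*t*(r - ra) : ℝ) : ℂ) * u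
    else if t ≤ 2/3 then ((r : ℝ) : ℂ) * u * Complex.exp (((β*(3*t-1) : ℝ) : ℂ) * Complex.I)
    else ((r + (3*t-2)*(rb - r) : ℝ) : ℂ) * u * Complex.exp (((β : ℝ) : ℂ) * Complex.I)
    with hγdef
  have cd1 : ContDiff ℝ 1 (fun t : ℝ => ((ra + 3*t*(r - ra) : ℝ) : ℂ) * u) := by
    apply ContDiff.mul _ contDiff_const
    exact Complex.ofRealCLM.contDiff.comp
      (contDiff_const.add ((contDiff_const.mul contDiff_id).mul contDiff_const))
  have cd2 : ContDiff ℝ 1 (fun t : ℝ => ((r : ℝ) : ℂ) * u * Complex.exp (((β*(3*t-1) : ℝ) : ℂ) * Complex.I)) := by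
    apply ContDiff.mul contDiff_const
    apply ContDiff.cexp
    exact (Complex.ofRealCLM.contDiff.comp
      (contDiff_const.mul ((contDiff_const.mul contDiff_id).sub contDiff_const))).mul contDiff_const
  have cd3 : ContDiff ℝ 1 (fun t : ℝ => ((r + (3*t-2)*(rb - r) : ℝ) : ℂ) * u * Complex.exp (((β : ℝ) : ℂ) * Complex.I)) := by
    apply ContDiff.mul _ contDiff_const
    apply ContDiff.mul _ contDiff_const
    exact Complex.ofRealCLM.contDiff.comp
      (contDiff_const.add (((contDiff_const.mul contDiff_id).sub contDiff_const).mul contDiff_const))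
  have hEq1 : ∀ t ∈ Set.Icc (0:ℝ) (1/3), γ t = ((ra + 3*t*(r - ra) : ℝ) : ℂ) * u := by
    intro t ht
    simp only [hγdef]
    rw [if_pos ht.2]
  have hEq2 : ∀ t ∈ Set.Icc (1/3:ℝ) (2/3),
      γ t = ((r : ℝ) : ℂ) * u * Complex.exp (((β*(3*t-1) : ℝ) : ℂ) * Complex.I) := by
    intro t ht
    simp only [hγdef]
    by_cases h : t ≤ 1/3
    · have htt : t = 1/3 := le_antisymm h ht.1
      subst htt
      rw [if_pos le_rfl,
        show (ra + 3*(1/3:ℝ)*(r - ra) : ℝ) = r from by ring,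
        show (β*(3*(1/3:ℝ)-1) : ℝ) = 0 from by ring]
      simp
    · rw [if_neg h, if_pos ht.2]
  have hEq3 : ∀ t ∈ Set.Icc (2/3:ℝ) 1,
      γ t = ((r + (3*t-2)*(rb - r) : ℝ) : ℂ) * u * Complex.exp (((β : ℝ) : ℂ) * Complex.I) := by
    intro t ht
    simp only [hγdef]
    by_cases h : t ≤ 2/3
    · have htt : t = 2/3 := le_antisymm h ht.1
      subst htt
      rw [if_neg (by norm_num), if_pos le_rfl,
        show (β*(3*(2/3:ℝ)-1) : ℝ) = β from by ring,
        show (r + (3*(2/3:ℝ)-2)*(rb - r) : ℝ) = r from by ring]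
    · rw [if_neg (fun hh => h (le_trans hh (by norm_num))), if_neg h]
  have hc1 : ContDiffOn ℝ 1 γ (Set.Icc (0:ℝ) (1/3)) := cd1.contDiffOn.congr hEq1
  have hc2 : ContDiffOn ℝ 1 γ (Set.Icc (1/3:ℝ) (2/3)) := cd2.contDiffOn.congr hEq2
  have hc3 : ContDiffOn ℝ 1 γ (Set.Icc (2/3:ℝ) 1) := cd3.contDiffOn.congr hEq3
  have hcont : ContinuousOn γ (Set.Icc (0:ℝ) 1) := by
    have hun : Set.Icc (0:ℝ) 1 = (Set.Icc (0:ℝ) (1/3) ∪ Set.Icc (1/3:ℝ) (2/3)) ∪ Set.Icc (2/3:ℝ) 1 := by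
      rw [Set.Icc_union_Icc_eq_Icc (by norm_num) (by norm_num),
        Set.Icc_union_Icc_eq_Icc (by norm_num) (by norm_num)]
    rw [hun]
    exact pasting (isClosed_Icc.union isClosed_Icc) isClosed_Icc
      (pasting isClosed_Icc isClosed_Icc hc1.continuousOn hc2.continuousOn) hc3.continuousOn
  have hmem : ∀ t ∈ Set.Icc (0 : ℝ) 1, R ≤ ‖γ t‖ ∧ ‖γ t‖ ≤ R' := by
    intro t ht
    by_cases ht1 : t ≤ 1/3
    · have hb1 : r ≤ ra + 3*t*(r - ra) := by
        nlinarith [mul_nonneg (by linarith [ht.1] : (0:ℝ) ≤ 1 - 3*t) (by linarith : (0:ℝ) ≤ ra - r)]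
      have hb2 : ra + 3*t*(r - ra) ≤ ra := by
        nlinarith [mul_nonneg (by linarith [ht.1] : (0:ℝ) ≤ 3*t) (by linarith : (0:ℝ) ≤ ra - r)]
      rw [hEq1 t ⟨ht.1, ht1⟩, norm_mul, hu, mul_one, Complex.norm_real, Real.norm_eq_abs,
        abs_of_pos (lt_of_lt_of_le hr0 hb1)]
      exact ⟨by linarith, by linarith⟩
    · by_cases ht2 : t ≤ 2/3
      · rw [hEq2 t ⟨le_of_not_ge ht1, ht2⟩, norm_mul, norm_mul, hu, mul_one,
          Complex.norm_real, Real.norm_eq_abs, Complex.norm_exp_ofReal_mul_I, mul_one, abs_of_pos hr0]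
        exact ⟨hRr, le_trans hrra h2⟩
      · have h5 : (2:ℝ)/3 ≤ t := (le_of_not_ge ht2)
        have hb1 : r ≤ r + (3*t-2)*(rb - r) := by
          nlinarith [mul_nonneg (by linarith : (0:ℝ) ≤ 3*t - 2) (by linarith : (0:ℝ) ≤ rb - r)]
        have hb2 : r + (3*t-2)*(rb - r) ≤ rb := by
          nlinarith [mul_nonneg (by linarith [ht.2] : (0:ℝ) ≤ 3 - 3*t) (by linarith : (0:ℝ) ≤ rb - r)]
        rw [hEq3 t ⟨h5, ht.2⟩, norm_mul, norm_mul, hu, mul_one,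
          Complex.norm_real, Real.norm_eq_abs, Complex.norm_exp_ofReal_mul_I, mul_one,
          abs_of_pos (lt_of_lt_of_le hr0 hb1)]
        exact ⟨by linarith, by linarith⟩
  have hγ0 : γ 0 = a := by
    simp only [hγdef]
    rw [if_pos (by norm_num : (0:ℝ) ≤ 1/3),
      show (ra + 3*(0:ℝ)*(r - ra) : ℝ) = ra from by ring, ha_eq]
  have hγ1 : γ 1 = b := by
    simp only [hγdef]
    rw [if_neg (by norm_num), if_neg (by norm_num),
      show (r + (3*(1:ℝ)-2)*(rb - r) : ℝ) = rb from by ring, hb_eq]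
  have e1 : eVariationOn γ (Set.Icc (0:ℝ) (1/3)) ≤ ENNReal.ofReal (ra - r) := by
    have hlip : ∀ x ∈ Set.Icc (0:ℝ) (1/3), ∀ y ∈ Set.Icc (0:ℝ) (1/3),
        dist (γ x) (γ y) ≤ (3*(ra - r)) * dist x y := by
      intro x hx y hy
      have hxy : γ x - γ y = ((3*(r - ra)*(x-y) : ℝ) : ℂ) * u := by
        rw [hEq1 x hx, hEq1 y hy]; push_cast; ring
      rw [Complex.dist_eq, hxy, norm_mul, hu, mul_one, Complex.norm_real, Real.norm_eq_abs, Real.dist_eq]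
      refine le_of_eq ?_
      rw [abs_mul, show (3*(r-ra) : ℝ) = -(3*(ra - r)) from by ring, abs_neg,
        abs_of_nonneg (by linarith : (0:ℝ) ≤ 3*(ra - r))]
    have := evar_le_of_lip (f := γ) (K := 3*(ra - r)) (a := 0) (b := 1/3)
      (by linarith) (by norm_num) hlip
    rw [show (3*(ra - r) * (1/3 - 0) : ℝ) = ra - r from by ring] at this
    exact this
  have e2 : eVariationOn γ (Set.Icc (1/3:ℝ) (2/3)) ≤ ENNReal.ofReal (r * |β|) := by
    have hlip : ∀ x ∈ Set.Icc (1/3:ℝ) (2/3), ∀ y ∈ Set.Icc (1/3:ℝ) (2/3),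
        dist (γ x) (γ y) ≤ (3 * r * |β|) * dist x y := by
      intro x hx y hy
      have hxy : γ x - γ y = ((r:ℝ):ℂ) * u *
          (Complex.exp (((β*(3*x-1) : ℝ) : ℂ) * Complex.I)
            - Complex.exp (((β*(3*y-1) : ℝ) : ℂ) * Complex.I)) := by
        rw [hEq2 x hx, hEq2 y hy]; ring
      rw [Complex.dist_eq, hxy, norm_mul, norm_mul, Complex.norm_real, Real.norm_eq_abs, hu, mul_one,
        abs_of_pos hr0, Real.dist_eq]
      have hexp := exp_I_lip (β*(3*x-1)) (β*(3*y-1))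
      have heq : |β*(3*x-1) - β*(3*y-1)| = 3 * |β| * |x - y| := by
        rw [show β*(3*x-1) - β*(3*y-1) = (3*β)*(x-y) from by ring, abs_mul, abs_mul,
          abs_of_nonneg (by norm_num : (0:ℝ) ≤ (3:ℝ))]
      calc r * ‖Complex.exp (((β*(3*x-1) : ℝ) : ℂ) * Complex.I)
            - Complex.exp (((β*(3*y-1) : ℝ) : ℂ) * Complex.I)‖
          ≤ r * |β*(3*x-1) - β*(3*y-1)| := by
            exact mul_le_mul_of_nonneg_left hexp hr0.le
        _ = (3 * r * |β|) * |x - y| := by rw [heq]; ring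
    have := evar_le_of_lip (f := γ) (K := 3 * r * |β|) (a := 1/3) (b := 2/3)
      (by positivity) (by norm_num) hlip
    rw [show (3 * r * |β| * (2/3 - 1/3) : ℝ) = r * |β| from by ring] at this
    exact this
  have e3 : eVariationOn γ (Set.Icc (2/3:ℝ) 1) ≤ ENNReal.ofReal (rb - r) := by
    have hlip : ∀ x ∈ Set.Icc (2/3:ℝ) 1, ∀ y ∈ Set.Icc (2/3:ℝ) 1,
        dist (γ x) (γ y) ≤ (3*(rb - r)) * dist x y := by
      intro x hx y hy
      have hxy : γ x - γ y = ((3*(rb - r)*(x-y) : ℝ) : ℂ) * u * Complex.exp (((β : ℝ) : ℂ) * Complex.I) := by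
        rw [hEq3 x hx, hEq3 y hy]; push_cast; ring
      rw [Complex.dist_eq, hxy, norm_mul, norm_mul, hu, mul_one, Complex.norm_real, Real.norm_eq_abs,
        Complex.norm_exp_ofReal_mul_I, mul_one, Real.dist_eq]
      refine le_of_eq ?_
      rw [abs_mul, abs_of_nonneg (by linarith : (0:ℝ) ≤ 3*(rb - r))]
    have := evar_le_of_lip (f := γ) (K := 3*(rb - r)) (a := 2/3) (b := 1)
      (by linarith) (by norm_num) hlip
    rw [show (3*(rb - r) * (1 - 2/3) : ℝ) = rb - r from by ring] at this
    exact this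
  have hsplit1 : eVariationOn γ (Set.Icc (0:ℝ) (1/3)) + eVariationOn γ (Set.Icc (1/3:ℝ) 1)
      = eVariationOn γ (Set.Icc (0:ℝ) 1) := by
    have := eVariationOn.Icc_add_Icc γ (s := Set.univ) (a := (0:ℝ)) (b := 1/3) (c := 1)
      (by norm_num) (by norm_num) (Set.mem_univ _)
    simpa using this
  have hsplit2 : eVariationOn γ (Set.Icc (1/3:ℝ) (2/3)) + eVariationOn γ (Set.Icc (2/3:ℝ) 1)
      = eVariationOn γ (Set.Icc (1/3:ℝ) 1) := by
    have := eVariationOn.Icc_add_Icc γ (s := Set.univ) (a := (1/3:ℝ)) (b := 2/3) (c := 1)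
      (by norm_num) (by norm_num) (Set.mem_univ _)
    simpa using this
  -- the final length estimate
  have habs2 : (‖a - b‖)^2
      = (ra+rb-2*r)^2 + 4*r*(r+(ra+rb-2*r))*(Real.sin (|β|/2))^2 := by
    have h := abs_formula ra rb β u hu
    rw [ha_eq, hb_eq]
    exact h
  have hdd : 0 ≤ ra + rb - 2*r := by
    rw [hrdef]
    rcases min_cases ra rb with ⟨h, _⟩ | ⟨h, _⟩ <;> rw [h] <;> linarith
  have habs' : ‖a - b‖
      = Real.sqrt ((ra+rb-2*r)^2 + 4*r*(r+(ra+rb-2*r))*(Real.sin (|β|/2))^2) := by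
    rw [← habs2, Real.sqrt_sq (norm_nonneg _)]
  have hkey := key_ineq (ra+rb-2*r) r (|β|/2) hdd hr0.le (by positivity) (by linarith)
  rw [← habs'] at hkey
  have hrmul : 2*r*(|β|/2) = r*|β| := by ring
  have hfinal : (ra - r) + r*|β| + (rb - r) ≤ π/2 * ‖a - b‖ := by linarith
  refine ⟨γ, ⟨hcont, 3, fun i => (i:ℝ)/3, by norm_num, by norm_num [Fin.last], ?_, ?_⟩,
    hγ0, hγ1, hmem, ?_⟩
  · intro i j h
    have h1' : ((i:ℕ):ℝ) ≤ ((j:ℕ):ℝ) := by exact_mod_cast (h : (i:ℕ) ≤ (j:ℕ))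
    simp only []
    linarith
  · intro i
    fin_cases i
    · convert hc1 using 2 <;> norm_num
    · convert hc2 using 2 <;> norm_num
    · convert hc3 using 2 <;> norm_num
  · have hlen : pathLength γ = eVariationOn γ (Set.Icc (0:ℝ) (1/3))
        + (eVariationOn γ (Set.Icc (1/3:ℝ) (2/3)) + eVariationOn γ (Set.Icc (2/3:ℝ) 1)) := by
      rw [hsplit2, hsplit1]; rfl
    rw [hlen]
    calc eVariationOn γ (Set.Icc (0:ℝ) (1/3))
        + (eVariationOn γ (Set.Icc (1/3:ℝ) (2/3)) + eVariationOn γ (Set.Icc (2/3:ℝ) 1))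
        ≤ ENNReal.ofReal (ra - r) + (ENNReal.ofReal (r*|β|) + ENNReal.ofReal (rb - r)) :=
          add_le_add e1 (add_le_add e2 e3)
      _ = ENNReal.ofReal ((ra - r) + (r*|β| + (rb - r))) := by
          rw [← ENNReal.ofReal_add (by positivity) (by linarith : (0:ℝ) ≤ rb - r),
            ← ENNReal.ofReal_add (by linarith : (0:ℝ) ≤ ra - r)
              (add_nonneg (by positivity) (by linarith : (0:ℝ) ≤ rb - r))]
      _ ≤ ENNReal.ofReal (π / 2 * ‖a - b‖) := by
          apply ENNReal.ofReal_le_ofReal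
          linarith

end Construction

/-- for `0 < R ≤ R'` and `a, b ∈ ℂ` with `R ≤ |a|,|b| ≤ R'`, the
points `a` and `b` are joined by a piecewise C¹ path in the closed annulus
`{R ≤ |ζ| ≤ R'}` of length at most `(π/2)·|a-b|`. -/
theorem annulus_path_bound (R R' : ℝ) (hR : 0 < R) (hRR' : R ≤ R') (a b : ℂ)
    (haR : R ≤ ‖a‖) (haR' : ‖a‖ ≤ R')
    (hbR : R ≤ ‖b‖) (hbR' : ‖b‖ ≤ R') :
    ∃ γ : ℝ → ℂ, PiecewiseC1On γ ∧ γ 0 = a ∧ γ 1 = b ∧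
      (∀ t ∈ Set.Icc (0 : ℝ) 1, R ≤ ‖γ t‖ ∧ ‖γ t‖ ≤ R') ∧
      pathLength γ ≤ ENNReal.ofReal (Real.pi / 2 * ‖a - b‖) := by
  have ha0 : a ≠ 0 := by
    intro h
    rw [h, norm_zero] at haR
    linarith
  have hb0 : b ≠ 0 := by
    intro h
    rw [h, norm_zero] at hbR
    linarith
  have hra0 : (0:ℝ) < ‖a‖ := lt_of_lt_of_le hR haR
  have hrb0 : (0:ℝ) < ‖b‖ := lt_of_lt_of_le hR hbR
  have hu : ‖a / ((‖a‖ : ℝ) : ℂ)‖ = 1 := by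
    rw [norm_div, Complex.norm_real, Real.norm_eq_abs, abs_of_pos hra0, div_self (ne_of_gt hra0)]
  have hc : ((‖a‖ : ℝ) : ℂ) ≠ 0 := by
    simpa using ne_of_gt hra0
  have ha_eq : a = ((‖a‖ : ℝ) : ℂ) * (a / ((‖a‖ : ℝ) : ℂ)) := by
    rw [mul_comm, div_mul_cancel₀ _ hc]
  have hb_eq : b = ((‖b‖ : ℝ) : ℂ) * (a / ((‖a‖ : ℝ) : ℂ))
      * Complex.exp ((Complex.arg (b/a) : ℝ) * Complex.I) := by
    have h := Complex.norm_mul_exp_arg_mul_I (b/a)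
    have habsq : ‖b/a‖ = ‖b‖ / ‖a‖ := norm_div _ _
    rw [habsq] at h
    have key : ((‖b‖ / ‖a‖ : ℝ) : ℂ)
        * Complex.exp ((Complex.arg (b/a) : ℝ) * Complex.I) * a = b := by
      rw [h, div_mul_cancel₀ _ ha0]
    calc b = ((‖b‖ / ‖a‖ : ℝ) : ℂ)
          * Complex.exp ((Complex.arg (b/a) : ℝ) * Complex.I) * a := key.symm
      _ = ((‖b‖ : ℝ) : ℂ) * (a / ((‖a‖ : ℝ) : ℂ))
          * Complex.exp ((Complex.arg (b/a) : ℝ) * Complex.I) := by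
          push_cast
          ring
  exact construction R R' (‖a‖) (‖b‖) (Complex.arg (b/a))
    (a / ((‖a‖ : ℝ) : ℂ)) hu hR haR haR' hbR hbR'
    (Complex.abs_arg_le_pi _) a b ha_eq hb_eq
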